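/- Let K be a field, let h be a positive integer and m := 2h, and let P, Q ∈ K[X] be polynomials with Q(0) ≠ 0. Regarding polynomials as power series in K[[X]], let Z := ⌈X^m⌉(P·Q^{−1}), a polynomial of degree less than m. Write the bisections P = P_1 + X^h·P_2, Q = Q_1 + X^h·Q_2, Z = Z_1 + X^h·Z_2 with deg P_1 < h, deg Q_1 < h, deg Z_1 < h (and deg Z_2 < h). Then: (1) Z_1 = ⌈X^h⌉(P_1·Q_1^{−1}) (where Q_1 is invertible in K[[X]] since Q_1(0) = Q(0) ≠ 0); (2) X^h divides the polynomial P_1 − Q_1·Z_1; and (3) Z_2 = ⌈X^h⌉( ( (P_1 − Q_1·Z_1)/X^h + P_2 − Q_2·Z_1 ) · Q_1^{−1} ). -/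

import Mathlib

open Polynomial

lemma aux14 {K : Type*} [Field K] (h : ℕ) (A B W : K[X]) (hB : B.coeff 0 ≠ 0)
    (hW : W.degree < (h : WithBot ℕ)) (hdvd : X ^ h ∣ (A - B * W)) :
    W = PowerSeries.trunc h ((A : PowerSeries K) * (B : PowerSeries K)⁻¹) := by
  have hB' : PowerSeries.constantCoeff (B : PowerSeries K) ≠ 0 := by
    rwa [← PowerSeries.coeff_zero_eq_constantCoeff_apply, Polynomial.coeff_coe]
  have hmul : (B : PowerSeries K) * (B : PowerSeries K)⁻¹ = 1 :=
    PowerSeries.mul_inv_cancel _ hB'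
  have hdiff : (A : PowerSeries K) * (B : PowerSeries K)⁻¹ - (W : PowerSeries K)
      = ((A - B * W : K[X]) : PowerSeries K) * (B : PowerSeries K)⁻¹ := by
    push_cast
    rw [sub_mul, mul_comm (B : PowerSeries K) (W : PowerSeries K), mul_assoc, hmul, mul_one]
  have hdvd' : (PowerSeries.X : PowerSeries K) ^ h ∣
      ((A : PowerSeries K) * (B : PowerSeries K)⁻¹ - (W : PowerSeries K)) := by
    rw [hdiff]
    obtain ⟨c, hc⟩ := hdvd
    exact Dvd.dvd.mul_right ⟨(c : PowerSeries K), by rw [hc]; push_cast; ring⟩ _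
  ext n
  rw [PowerSeries.coeff_trunc]
  split_ifs with hn
  · have h0 := PowerSeries.X_pow_dvd_iff.mp hdvd' n hn
    rw [map_sub, sub_eq_zero, Polynomial.coeff_coe] at h0
    exact h0.symm
  · exact Polynomial.coeff_eq_zero_of_degree_lt
      (lt_of_lt_of_le hW (by exact_mod_cast le_of_not_gt hn))

/-- Divide-and-conquer computation of the truncated power-series quotient
`Z = ⌈X^(2h)⌉(P/Q)`: with bisections `P = P₁ + X^h·P₂`, `Q = Q₁ + X^h·Q₂`,
`Z = Z₁ + X^h·Z₂`, one has `Z₁ = ⌈X^h⌉(P₁/Q₁)`, `X^h ∣ P₁ − Q₁·Z₁`, and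
`Z₂ = ⌈X^h⌉(((P₁ − Q₁·Z₁)/X^h + P₂ − Q₂·Z₁)/Q₁)`. -/
theorem stmt14 {K : Type*} [Field K] (h : ℕ) (hh : 0 < h) (P Q : K[X])
    (hQ : Q.eval 0 ≠ 0) (Z P₁ P₂ Q₁ Q₂ Z₁ Z₂ : K[X])
    (hZ : Z = PowerSeries.trunc (2 * h) ((P : PowerSeries K) * (Q : PowerSeries K)⁻¹))
    (hPbis : P = P₁ + X ^ h * P₂) (hP₁ : P₁.degree < (h : WithBot ℕ))
    (hQbis : Q = Q₁ + X ^ h * Q₂) (hQ₁ : Q₁.degree < (h : WithBot ℕ))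
    (hZbis : Z = Z₁ + X ^ h * Z₂) (hZ₁ : Z₁.degree < (h : WithBot ℕ))
    (hZ₂ : Z₂.degree < (h : WithBot ℕ)) :
    Z₁ = PowerSeries.trunc h ((P₁ : PowerSeries K) * (Q₁ : PowerSeries K)⁻¹) ∧
    X ^ h ∣ P₁ - Q₁ * Z₁ ∧
    Z₂ = PowerSeries.trunc h
      ((((P₁ - Q₁ * Z₁) /ₘ X ^ h + P₂ - Q₂ * Z₁ : K[X]) : PowerSeries K) *
        (Q₁ : PowerSeries K)⁻¹) := by
  have hQ0 : Q.coeff 0 ≠ 0 := by rwa [Polynomial.coeff_zero_eq_eval_zero]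
  have hQ₁0 : Q₁.coeff 0 ≠ 0 := by
    have : Q.coeff 0 = Q₁.coeff 0 := by
      rw [hQbis]
      simp [Polynomial.mul_coeff_zero, Polynomial.coeff_X_pow, hh.ne]
    rwa [this] at hQ0
  have hQ0' : PowerSeries.constantCoeff (Q : PowerSeries K) ≠ 0 := by
    rwa [← PowerSeries.coeff_zero_eq_constantCoeff_apply, Polynomial.coeff_coe]
  have hmulQ : (Q : PowerSeries K) * (Q : PowerSeries K)⁻¹ = 1 :=
    PowerSeries.mul_inv_cancel _ hQ0'
  -- step 1: X^(2h) divides P - Q*Z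
  have hdvd2 : X ^ (2 * h) ∣ (P - Q * Z : K[X]) := by
    rw [Polynomial.X_pow_dvd_iff]
    intro d hd
    have hco : ((P - Q * Z : K[X]) : PowerSeries K)
        = (Q : PowerSeries K) * ((P : PowerSeries K) * (Q : PowerSeries K)⁻¹
            - (Z : PowerSeries K)) := by
      push_cast
      rw [mul_sub, ← mul_assoc, mul_comm (Q : PowerSeries K) (P : PowerSeries K), mul_assoc,
        hmulQ, mul_one]
    have hdvdPS : (PowerSeries.X : PowerSeries K) ^ (2 * h) ∣
        ((P : PowerSeries K) * (Q : PowerSeries K)⁻¹ - (Z : PowerSeries K)) := by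
      rw [PowerSeries.X_pow_dvd_iff]
      intro m hm
      rw [map_sub, Polynomial.coeff_coe, hZ, PowerSeries.coeff_trunc, if_pos hm, sub_self]
    have := PowerSeries.X_pow_dvd_iff.mp (hdvdPS.mul_left (Q : PowerSeries K)) d hd
    rw [← hco, Polynomial.coeff_coe] at this
    exact this
  -- step 2: bisected identity
  have hiden : P - Q * Z = (P₁ - Q₁ * Z₁) + X ^ h * (P₂ - Q₂ * Z₁ - Q₁ * Z₂)
      - X ^ (2 * h) * (Q₂ * Z₂) := by
    rw [hPbis, hQbis, hZbis]; ring
  -- step 3: X^h divides P₁ - Q₁*Z₁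
  have hdvd1 : X ^ h ∣ P₁ - Q₁ * Z₁ := by
    rw [Polynomial.X_pow_dvd_iff]
    intro d hd
    have h1 := Polynomial.X_pow_dvd_iff.mp hdvd2 d (lt_of_lt_of_le hd (by omega))
    rw [hiden] at h1
    simpa [Polynomial.coeff_X_pow_mul', (show ¬ h ≤ d by omega),
      (show ¬ 2 * h ≤ d by omega)] using h1
  -- step 4: exact quotient
  have hmo : (X ^ h : K[X]).Monic := monic_X_pow h
  have hmod : (P₁ - Q₁ * Z₁) %ₘ X ^ h = 0 :=
    (Polynomial.modByMonic_eq_zero_iff_dvd hmo).mpr hdvd1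
  have hE : X ^ h * ((P₁ - Q₁ * Z₁) /ₘ X ^ h) = P₁ - Q₁ * Z₁ := by
    have := Polynomial.modByMonic_add_div (P₁ - Q₁ * Z₁) (X ^ h)
    rw [hmod, zero_add] at this
    exact this
  -- step 5: X^h divides the residual for Z₂
  have hdvdF : X ^ h ∣ ((P₁ - Q₁ * Z₁) /ₘ X ^ h + P₂ - Q₂ * Z₁ - Q₁ * Z₂) := by
    have hXF : X ^ h * ((P₁ - Q₁ * Z₁) /ₘ X ^ h + P₂ - Q₂ * Z₁ - Q₁ * Z₂)
        = (P - Q * Z) + X ^ (2 * h) * (Q₂ * Z₂) := by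
      linear_combination hE - hiden
    rw [Polynomial.X_pow_dvd_iff]
    intro d hd
    have h2 := congrArg (fun p : K[X] => p.coeff (d + h)) hXF
    simp only [Polynomial.coeff_X_pow_mul, Polynomial.coeff_add] at h2
    rw [Polynomial.X_pow_dvd_iff.mp hdvd2 (d + h) (by omega),
      Polynomial.coeff_X_pow_mul' , if_neg (by omega), add_zero] at h2
    exact h2
  refine ⟨aux14 h P₁ Q₁ Z₁ hQ₁0 hZ₁ hdvd1, hdvd1,
    aux14 h ((P₁ - Q₁ * Z₁) /ₘ X ^ h + P₂ - Q₂ * Z₁) Q₁ Z₂ hQ₁0 hZ₂ hdvdF⟩
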